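/- Let A be a self-adjoint positive definite operator with compact resolvent on H, and let 𝒜 be the thermoelastic generator with parameters m > 0, σ > 0, τ > 0 and (α, β, γ) ∈ [0,1]² × (0,1] satisfying α > (β+1)/2. Then 0 ∈ σ(𝒜): the operator 𝒜 is not surjective onto ℋ. -/
import Mathlib


open Filter Complex

noncomputable section

/-- State space element: four coefficient sequences `(u, v, θ, q)` w.r.t. the
orthonormal eigenbasis of `A`. -/
abbrev ThermoSt := (ℕ → ℂ) × (ℕ → ℂ) × (ℕ → ℂ) × (ℕ → ℂ)

/-- Summand of the squared `ℋ`-norm: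
`σ‖A^{1/2}u‖² + m‖A^{γ/2}v‖² + ‖v‖² + ‖θ‖² + τ‖q‖²` written spectrally. -/
def thermoSummand (μ : ℕ → ℝ) (m σ τ γ : ℝ) (U : ThermoSt) (n : ℕ) : ℝ :=
  σ * μ n * ‖U.1 n‖ ^ 2 + m * μ n ^ γ * ‖U.2.1 n‖ ^ 2 + ‖U.2.1 n‖ ^ 2
    + ‖U.2.2.1 n‖ ^ 2 + τ * ‖U.2.2.2 n‖ ^ 2

/-- Membership in the state space `ℋ = D(A^{1/2}) × D(A^{γ/2}) × H × H`. -/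
def thermoMemH (μ : ℕ → ℝ) (m σ τ γ : ℝ) (U : ThermoSt) : Prop :=
  Summable (thermoSummand μ m σ τ γ U)

/-- The squared `ℋ`-norm. -/
def thermoNormSq (μ : ℕ → ℝ) (m σ τ γ : ℝ) (U : ThermoSt) : ℝ :=
  ∑' n, thermoSummand μ m σ τ γ U n

/-- The `ℋ`-inner product. -/
def thermoInner (μ : ℕ → ℝ) (m σ τ γ : ℝ) (U V : ThermoSt) : ℂ :=
  ∑' n, (((σ * μ n : ℝ) : ℂ) * (starRingEnd ℂ (U.1 n)) * V.1 n
      + ((m * μ n ^ γ : ℝ) : ℂ) * (starRingEnd ℂ (U.2.1 n)) * V.2.1 n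
      + (starRingEnd ℂ (U.2.1 n)) * V.2.1 n
      + (starRingEnd ℂ (U.2.2.1 n)) * V.2.2.1 n
      + ((τ : ℝ) : ℂ) * (starRingEnd ℂ (U.2.2.2 n)) * V.2.2.2 n)

/-- The thermoelastic operator `𝒜`, acting diagonally on eigenspaces of `A`:
`𝒜(u,v,θ,q) = (v, −(I+mA^γ)⁻¹(σAu − A^αθ), −A^αv + A^{β/2}q, τ⁻¹(−q − A^{β/2}θ))`. -/
def thermoOp (μ : ℕ → ℝ) (m σ τ α β γ : ℝ) (U : ThermoSt) : ThermoSt :=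
  (U.2.1,
   fun n => -(((1 + m * μ n ^ γ : ℝ) : ℂ))⁻¹ *
      (((σ * μ n : ℝ) : ℂ) * U.1 n - ((μ n ^ α : ℝ) : ℂ) * U.2.2.1 n),
   fun n => -((μ n ^ α : ℝ) : ℂ) * U.2.1 n + ((μ n ^ (β / 2) : ℝ) : ℂ) * U.2.2.2 n,
   fun n => ((τ : ℝ) : ℂ)⁻¹ *
      (-(U.2.2.2 n) - ((μ n ^ (β / 2) : ℝ) : ℂ) * U.2.2.1 n))

/-- The (maximal) domain of `𝒜`:  `U ∈ ℋ`, `𝒜U ∈ ℋ`, `v ∈ D(A^{1/2})`,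
`σAu − A^αθ ∈ D(A^{−γ/2})`, `−A^αv + A^{β/2}q ∈ H`, `q + A^{β/2}θ ∈ H`. -/
def thermoDom (μ : ℕ → ℝ) (m σ τ α β γ : ℝ) (U : ThermoSt) : Prop :=
  thermoMemH μ m σ τ γ U ∧ thermoMemH μ m σ τ γ (thermoOp μ m σ τ α β γ U) ∧
  Summable (fun n => μ n * ‖U.2.1 n‖ ^ 2) ∧
  Summable (fun n => μ n ^ (-γ) *
    ‖((σ * μ n : ℝ) : ℂ) * U.1 n - ((μ n ^ α : ℝ) : ℂ) * U.2.2.1 n‖ ^ 2) ∧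
  Summable (fun n => ‖-((μ n ^ α : ℝ) : ℂ) * U.2.1 n + ((μ n ^ (β / 2) : ℝ) : ℂ) * U.2.2.2 n‖ ^ 2) ∧
  Summable (fun n => ‖U.2.2.2 n + ((μ n ^ (β / 2) : ℝ) : ℂ) * U.2.2.1 n‖ ^ 2)

/-- With `m > 0` and `α > (β+1)/2`, the thermoelastic operator `𝒜`
is not surjective onto `ℋ`; hence `0 ∈ σ(𝒜)`. -/
theorem thermoOp_not_surjective (μ : ℕ → ℝ) (m σ τ α β γ : ℝ) (c : ℝ)
    (hc : 0 < c) (hμ : ∀ n, c ≤ μ n) (hμtop : Tendsto μ atTop atTop)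
    (hm : 0 < m) (hσ : 0 < σ) (hτ : 0 < τ)
    (hα : α ∈ Set.Icc (0:ℝ) 1) (hβ : β ∈ Set.Icc (0:ℝ) 1) (hγ : γ ∈ Set.Ioc (0:ℝ) 1)
    (hQ : (β + 1) / 2 < α) :
    ∃ G : ThermoSt, thermoMemH μ m σ τ γ G ∧
      ∀ U : ThermoSt, thermoDom μ m σ τ α β γ U → thermoOp μ m σ τ α β γ U ≠ G := by
  classical
  obtain ⟨φ, hφmono, hφ⟩ :=
    extraction_forall_of_eventually (P := fun k n => (2:ℝ)^k ≤ μ n)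
      (fun k => hμtop.eventually_ge_atTop _)
  have hμpos : ∀ n, 0 < μ n := fun n => hc.trans_le (hμ n)
  set s : ℝ := (1 + 2*α - β)/2 with hs
  have hs1 : 1 - s < 0 := by simp only [hs]; linarith
  have hs2 : 0 < 2*α - β - s := by simp only [hs]; linarith
  set g : ℕ → ℂ := fun n => if n ∈ Set.range φ then ((μ n ^ (-s/2) : ℝ) : ℂ) else 0 with hg
  have hgnorm : ∀ n ∈ Set.range φ, ‖g n‖^2 = μ n ^ (-s) := by
    intro n hn
    simp only [hg, if_pos hn, Complex.norm_real, Real.norm_eq_abs,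
      _root_.abs_of_nonneg (Real.rpow_nonneg (hμpos n).le _)]
    rw [← Real.rpow_natCast (μ n ^ (-s/2)) 2, ← Real.rpow_mul (hμpos n).le]
    norm_num
  have hgzero : ∀ n ∉ Set.range φ, g n = 0 := fun n hn => by simp only [hg]; exact if_neg hn
  have hφone : ∀ k, (1:ℝ) ≤ μ (φ k) := fun k =>
    le_trans (one_le_pow₀ (by norm_num)) (hφ k)
  refine ⟨(g, 0, 0, 0), ?_, ?_⟩
  · -- membership of G in ℋ
    have heq : thermoSummand μ m σ τ γ (g, 0, 0, 0) = fun n => σ * μ n * ‖g n‖^2 := by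
      funext n; simp [thermoSummand]
    rw [thermoMemH, heq]
    rw [← Function.Injective.summable_iff hφmono.injective
      (by intro n hn; rw [hgzero n hn]; simp)]
    have hratio : (2:ℝ) ^ (1 - s) < 1 :=
      Real.rpow_lt_one_of_one_lt_of_neg (by norm_num) hs1
    refine Summable.of_nonneg_of_le (fun k => ?_) (fun k => ?_)
      (((summable_geometric_of_lt_one (Real.rpow_nonneg (by norm_num) _) hratio).mul_left σ))
    · exact mul_nonneg (mul_nonneg hσ.le (hμpos _).le) (sq_nonneg _)
    · show σ * μ (φ k) * ‖g (φ k)‖^2 ≤ σ * ((2:ℝ) ^ (1 - s)) ^ k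
      have h1 : (σ * μ (φ k) * ‖g (φ k)‖^2 : ℝ) = σ * μ (φ k) ^ (1 - s) := by
        rw [hgnorm _ ⟨k, rfl⟩, mul_assoc]
        congr 1
        rw [show (1:ℝ) - s = 1 + (-s) by ring, Real.rpow_add (hμpos _), Real.rpow_one]
      rw [h1]
      have h2 : μ (φ k) ^ (1 - s) ≤ ((2:ℝ)^k) ^ (1 - s) :=
        Real.rpow_le_rpow_of_nonpos (by positivity) (hφ k) hs1.le
      have h3 : ((2:ℝ)^k) ^ (1 - s) = ((2:ℝ) ^ (1 - s)) ^ k := by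
        rw [← Real.rpow_natCast 2 k, ← Real.rpow_mul (by norm_num),
          mul_comm, Real.rpow_mul (by norm_num), Real.rpow_natCast]
      exact mul_le_mul_of_nonneg_left (h3 ▸ h2) hσ.le
  · -- non-attainment
    rintro U hU hEq
    have hv : U.2.1 = g := congrArg Prod.fst hEq
    have hq : (fun n => -((μ n ^ α : ℝ) : ℂ) * U.2.1 n + ((μ n ^ (β / 2) : ℝ) : ℂ) * U.2.2.2 n)
        = (0 : ℕ → ℂ) := congrArg (fun W : ThermoSt => W.2.2.1) hEq
    have hqn : ∀ n, ‖U.2.2.2 n‖ = μ n ^ (α - β/2) * ‖g n‖ := by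
      intro n
      have h0 : ((μ n ^ (β / 2) : ℝ) : ℂ) * U.2.2.2 n = ((μ n ^ α : ℝ) : ℂ) * g n := by
        have := congrFun hq n
        rw [hv] at this
        simp only [Pi.zero_apply] at this
        linear_combination this
      have hnq : μ n ^ (β/2) * ‖U.2.2.2 n‖ = μ n ^ α * ‖g n‖ := by
        have := congrArg norm h0
        simpa [norm_mul, Complex.norm_real, Real.norm_eq_abs,
          _root_.abs_of_nonneg (Real.rpow_nonneg (hμpos n).le _)] using this
      have hb : (0:ℝ) < μ n ^ (β/2) := Real.rpow_pos_of_pos (hμpos n) _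
      apply mul_left_cancel₀ hb.ne'
      rw [hnq, ← mul_assoc, ← Real.rpow_add (hμpos n)]
      ring_nf
    -- summability of ‖q‖²
    have hqs : Summable (fun n => ‖U.2.2.2 n‖^2) := by
      have h1 := hU.1
      have h2 : Summable (fun n => τ * ‖U.2.2.2 n‖^2) := by
        refine Summable.of_nonneg_of_le (fun n => by positivity) (fun n => ?_) h1
        have := hμpos n
        have hγ0 := Real.rpow_nonneg (hμpos n).le γ
        simp only [thermoSummand]
        nlinarith [sq_nonneg ‖U.1 n‖, sq_nonneg ‖U.2.1 n‖, sq_nonneg ‖U.2.2.1 n‖,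
          mul_nonneg (mul_nonneg hσ.le (hμpos n).le) (sq_nonneg ‖U.1 n‖),
          mul_nonneg (mul_nonneg hm.le hγ0) (sq_nonneg ‖U.2.1 n‖)]
      have := h2.mul_left τ⁻¹
      simpa [← mul_assoc, inv_mul_cancel₀ hτ.ne'] using this
    have htend : Tendsto (fun k => ‖U.2.2.2 (φ k)‖^2) atTop (nhds 0) :=
      (hqs.tendsto_atTop_zero).comp hφmono.tendsto_atTop
    have hbig : ∀ k, (1:ℝ) ≤ ‖U.2.2.2 (φ k)‖^2 := by
      intro k
      rw [hqn, mul_pow, hgnorm _ ⟨k, rfl⟩]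
      rw [← Real.rpow_natCast (μ (φ k) ^ (α - β/2)) 2, ← Real.rpow_mul (hμpos _).le,
        ← Real.rpow_add (hμpos _)]
      have he : (α - β/2) * ((2:ℕ):ℝ) + (-s) = 2*α - β - s := by push_cast; ring
      rw [he]
      exact Real.one_le_rpow (hφone k) hs2.le
    have := htend.eventually (eventually_lt_nhds (by norm_num : (0:ℝ) < 1))
    obtain ⟨k, hk⟩ := this.exists
    exact absurd (hbig k) (not_le.mpr hk)
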